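/- Let d ∈ ℕ, i ∈ {1,…,d}, let 0 < α̲ ≤ ᾱ < 2 and let φ satisfy the weak scaling condition (WS). Let η ∈ (ᾱ/2, 1], κ₀ ≥ 1, κ₁ > 0, and let κ : ℝ^d × ℝ^d → ℝ be a measurable function with κ₀^{-1} ≤ κ(x,y) ≤ κ₀ for all x, y ∈ ℝ^d and |κ(x, x+h) − κ(x,x)| ≤ κ₁ |h|^η for all x ∈ ℝ^d and all h ∈ ℝ^d with |h| ≤ 1. Then there exists a constant c > 0, depending only on φ, η, κ₀, κ₁, such that for every function g : ℝ^d → ℝ that is twice continuously differentiable with compact support, every x ∈ ℝ^d, and every r ∈ (0,1): the limit L^{(i)} g(x) := lim_{ε ↓ 0} ∫_{{|t| > ε}} (g(x + t e_i) − g(x)) · κ(x, x + t e_i) / (|t| φ(|t|)) dt exists and satisfies |L^{(i)} g(x)| ≤ (c / φ(r)) ( r² ‖D²g‖_∞ + r^{η+1} ‖∇g‖_∞ + ‖g‖_∞ ), where ‖D²g‖_∞ is the supremum norm of the second derivative of g, ‖∇g‖_∞ the supremum norm of the gradient, and ‖g‖_∞ the supremum norm of g. -/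

import Mathlib

open MeasureTheory Real Filter Topology

set_option maxHeartbeats 1000000

/-- Under (WS) and the conditions (κ-bounds) and (K_η) on `κ`, there is a
constant `c' > 0` (depending only on `φ, η, κ₀, κ₁`) such that for every
`g ∈ C²_c(ℝ^d)`, every `x` and every `r ∈ (0,1)`, the limit
`L^{(i)} g(x) = lim_{ε↓0} ∫_{|t|>ε} (g(x+te_i) - g(x)) κ(x, x+te_i)/(|t| φ(|t|))dt`
exists and `|L^{(i)} g(x)| ≤ (c'/φ(r)) (r² ‖D²g‖_∞ + r^{η+1} ‖∇g‖_∞ + ‖g‖_∞)`. -/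
theorem stmt_10 (d : ℕ) (i : Fin d) (α₀ α₁ c C η κ₀ κ₁ : ℝ) (φ : ℝ → ℝ)
    (hα₀ : 0 < α₀) (hαα : α₀ ≤ α₁) (hα₁ : α₁ < 2)
    (hc : 0 < c) (hc1 : c ≤ 1) (hC : 1 ≤ C)
    (hφpos : ∀ r : ℝ, 0 < r → 0 < φ r)
    (hφmono : ∀ r R : ℝ, 0 < r → r ≤ R → φ r ≤ φ R)
    (hWS : ∀ r R : ℝ, 0 < r → r ≤ R →
      c * (R / r) ^ α₀ ≤ φ R / φ r ∧ φ R / φ r ≤ C * (R / r) ^ α₁)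
    (hη₁ : α₁ / 2 < η) (hη₂ : η ≤ 1) (hκ₀ : 1 ≤ κ₀) (hκ₁ : 0 < κ₁)
    (κ : EuclideanSpace ℝ (Fin d) → EuclideanSpace ℝ (Fin d) → ℝ)
    (hκmeas : Measurable (Function.uncurry κ))
    (hκbdd : ∀ x y : EuclideanSpace ℝ (Fin d), κ₀⁻¹ ≤ κ x y ∧ κ x y ≤ κ₀)
    (hκreg : ∀ (x h : EuclideanSpace ℝ (Fin d)), ‖h‖ ≤ 1 →
      |κ x (x + h) - κ x x| ≤ κ₁ * ‖h‖ ^ η) :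
    ∃ c' : ℝ, 0 < c' ∧
      ∀ g : EuclideanSpace ℝ (Fin d) → ℝ, ContDiff ℝ 2 g → HasCompactSupport g →
        ∀ x : EuclideanSpace ℝ (Fin d), ∃ L : ℝ,
          Tendsto
            (fun ε : ℝ =>
              ∫ t in {t : ℝ | ε < |t|},
                (g (x + t • EuclideanSpace.single i 1) - g x) *
                  κ x (x + t • EuclideanSpace.single i 1) / (|t| * φ |t|))
            (𝓝[>] (0 : ℝ)) (𝓝 L) ∧
          ∀ r : ℝ, 0 < r → r < 1 →
            |L| ≤ c' / φ r *
              (r ^ 2 * (⨆ y : EuclideanSpace ℝ (Fin d), ‖iteratedFDeriv ℝ 2 g y‖) +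
               r ^ (η + 1) * (⨆ y : EuclideanSpace ℝ (Fin d), ‖fderiv ℝ g y‖) +
               ⨆ y : EuclideanSpace ℝ (Fin d), |g y|) := by
  classical
  have hα₁0 : 0 < α₁ := lt_of_lt_of_le hα₀ hαα
  have h2α : 0 < 2 - α₁ := by linarith
  have hη0 : 0 < η := by linarith
  have hηα : 0 < η - α₁ + 1 := by linarith
  have hκ₀0 : (0 : ℝ) < κ₀ := by linarith
  have hC0 : (0 : ℝ) < C := by linarith
  refine ⟨2*C*κ₀/(2-α₁) + 2*C*κ₁/(η-α₁+1) + 4*κ₀/(c*α₀), by positivity, ?_⟩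
  intro g hg hgc x
  -- basic smoothness facts
  have hgcont : Continuous g := hg.continuous
  have hgdiff : Differentiable ℝ g := hg.differentiable (by norm_num)
  have hg1 : ContDiff ℝ 1 (fderiv ℝ g) := hg.fderiv_right (by norm_num)
  have hfdcont : Continuous (fderiv ℝ g) := hg1.continuous
  have hfddiff : Differentiable ℝ (fderiv ℝ g) := hg1.differentiable (by norm_num)
  have hi2cont : Continuous (iteratedFDeriv ℝ 2 g) := hg.continuous_iteratedFDeriv (by norm_num)
  -- the direction vector
  set e : EuclideanSpace ℝ (Fin d) := EuclideanSpace.single i (1:ℝ) with he_def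
  have he : ‖e‖ = 1 := by simp [he_def]
  set γ : ℝ → EuclideanSpace ℝ (Fin d) := fun t => x + t • e with hγ_def
  have hγcont : Continuous γ := by
    exact continuous_const.add (continuous_id.smul continuous_const)
  have hγnorm : ∀ t : ℝ, ‖(t : ℝ) • e‖ = |t| := by
    intro t; rw [norm_smul, he, mul_one, Real.norm_eq_abs]
  -- sup norms
  set M₀ : ℝ := ⨆ y : EuclideanSpace ℝ (Fin d), |g y| with hM₀def
  set M₁ : ℝ := ⨆ y : EuclideanSpace ℝ (Fin d), ‖fderiv ℝ g y‖ with hM₁def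
  set M₂ : ℝ := ⨆ y : EuclideanSpace ℝ (Fin d), ‖iteratedFDeriv ℝ 2 g y‖ with hM₂def
  have hb0 : BddAbove (Set.range fun y => |g y|) := by
    simpa [Real.norm_eq_abs] using hgcont.norm.bddAbove_range_of_hasCompactSupport hgc.norm
  have hb1 : BddAbove (Set.range fun y => ‖fderiv ℝ g y‖) :=
    hfdcont.norm.bddAbove_range_of_hasCompactSupport (hgc.fderiv (𝕜 := ℝ)).norm
  have hb2 : BddAbove (Set.range fun y => ‖iteratedFDeriv ℝ 2 g y‖) :=
    hi2cont.norm.bddAbove_range_of_hasCompactSupport (hgc.iteratedFDeriv 2).norm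
  have hM0 : ∀ y, |g y| ≤ M₀ := fun y => le_ciSup hb0 y
  have hM1 : ∀ y, ‖fderiv ℝ g y‖ ≤ M₁ := fun y => le_ciSup hb1 y
  have hM2 : ∀ y, ‖iteratedFDeriv ℝ 2 g y‖ ≤ M₂ := fun y => le_ciSup hb2 y
  have hM0nn : 0 ≤ M₀ := le_trans (abs_nonneg _) (hM0 x)
  have hM1nn : 0 ≤ M₁ := le_trans (norm_nonneg _) (hM1 x)
  have hM2nn : 0 ≤ M₂ := le_trans (norm_nonneg _) (hM2 x)
  -- derivative along the line
  have hγderiv : ∀ s : ℝ, HasDerivAt γ e s := by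
    intro s
    have h1 : HasDerivAt (fun y : ℝ => y • e) ((1:ℝ) • e) s := (hasDerivAt_id s).smul_const e
    simpa [hγ_def] using h1.const_add x
  set u : ℝ → ℝ := fun s => g (γ s) with hu_def
  set v : ℝ → ℝ := fun s => (fderiv ℝ g (γ s)) e with hv_def
  have hu : ∀ s, HasDerivAt u (v s) s := by
    intro s
    exact (hgdiff (γ s)).hasFDerivAt.comp_hasDerivAt s (hγderiv s)
  have hvb : ∀ s, |v s| ≤ M₁ := by
    intro s
    calc |v s| ≤ ‖fderiv ℝ g (γ s)‖ * ‖e‖ := (fderiv ℝ g (γ s)).le_opNorm e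
      _ = ‖fderiv ℝ g (γ s)‖ := by rw [he, mul_one]
      _ ≤ M₁ := hM1 _
  have hu0 : u 0 = g x := by simp [hu_def, hγ_def]
  -- first-order bound
  have hf1 : ∀ t : ℝ, |g (γ t) - g x| ≤ M₁ * |t| := by
    intro t
    have := Convex.norm_image_sub_le_of_norm_hasDerivWithin_le
      (f := u) (f' := v) (s := Set.univ) (C := M₁)
      (fun s _ => (hu s).hasDerivWithinAt) (fun s _ => by simpa using hvb s)
      convex_univ (Set.mem_univ 0) (Set.mem_univ t)
    simpa [hu0, Real.norm_eq_abs] using this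
  -- Lipschitz bound for the gradient
  have h2norm : ∀ y, ‖fderiv ℝ (fderiv ℝ g) y‖ ≤ M₂ := by
    intro y
    have e1 : ‖iteratedFDeriv ℝ 0 (fderiv ℝ (fderiv ℝ g)) y‖ =
        ‖iteratedFDeriv ℝ 1 (fderiv ℝ g) y‖ := norm_iteratedFDeriv_fderiv
    have e2 : ‖iteratedFDeriv ℝ 1 (fderiv ℝ g) y‖ = ‖iteratedFDeriv ℝ 2 g y‖ :=
      norm_iteratedFDeriv_fderiv
    have e0 : ‖iteratedFDeriv ℝ 0 (fderiv ℝ (fderiv ℝ g)) y‖ =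
        ‖fderiv ℝ (fderiv ℝ g) y‖ := norm_iteratedFDeriv_zero
    rw [← e0, e1, e2]; exact hM2 y
  have hlip : ∀ a b : EuclideanSpace ℝ (Fin d),
      ‖fderiv ℝ g a - fderiv ℝ g b‖ ≤ M₂ * ‖a - b‖ := by
    intro a b
    exact Convex.norm_image_sub_le_of_norm_fderiv_le
      (fun y _ => hfddiff y) (fun y _ => h2norm y)
      convex_univ (Set.mem_univ b) (Set.mem_univ a)
  -- second-order (symmetrized) bound
  have hf2 : ∀ t : ℝ, 0 ≤ t →
      |(g (γ t) - g x) + (g (γ (-t)) - g x)| ≤ 2 * M₂ * t * t := by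
    intro t ht
    set w : ℝ → ℝ := fun s => u s + u (-s) with hw_def
    have hw : ∀ s, HasDerivAt w (v s - v (-s)) s := by
      intro s
      have h2 : HasDerivAt (fun s : ℝ => u (-s)) (v (-s) * (-1)) s :=
        (hu (-s)).comp s (hasDerivAt_neg s)
      have := (hu s).add h2
      rw [show w = u + fun s => u (-s) from rfl]
      simpa [sub_eq_add_neg, mul_comm] using this
    have hwb : ∀ s ∈ Set.Icc (0:ℝ) t, ‖v s - v (-s)‖ ≤ 2 * M₂ * t := by
      intro s hs
      have hd : v s - v (-s) = (fderiv ℝ g (γ s) - fderiv ℝ g (γ (-s))) e := by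
        simp [hv_def]
      have hb : ‖(fderiv ℝ g (γ s) - fderiv ℝ g (γ (-s))) e‖ ≤
          ‖fderiv ℝ g (γ s) - fderiv ℝ g (γ (-s))‖ * ‖e‖ :=
        (fderiv ℝ g (γ s) - fderiv ℝ g (γ (-s))).le_opNorm e
      have hγd : γ s - γ (-s) = (2 * s) • e := by
        simp only [hγ_def, add_sub_add_left_eq_sub, ← sub_smul]
        congr 1
        ring
      have hnorm : ‖γ s - γ (-s)‖ = 2 * s := by
        rw [hγd, norm_smul, he, mul_one, Real.norm_eq_abs, abs_of_nonneg]
        nlinarith [hs.1]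
      calc ‖v s - v (-s)‖ ≤ ‖fderiv ℝ g (γ s) - fderiv ℝ g (γ (-s))‖ * ‖e‖ := by
            rw [hd]; exact hb
        _ = ‖fderiv ℝ g (γ s) - fderiv ℝ g (γ (-s))‖ := by rw [he, mul_one]
        _ ≤ M₂ * ‖γ s - γ (-s)‖ := hlip _ _
        _ = M₂ * (2 * s) := by rw [hnorm]
        _ ≤ 2 * M₂ * t := by nlinarith [hs.2, hs.1]
    have := Convex.norm_image_sub_le_of_norm_hasDerivWithin_le
      (f := w) (f' := fun s => v s - v (-s)) (s := Set.Icc 0 t) (C := 2 * M₂ * t)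
      (fun s _ => (hw s).hasDerivWithinAt) hwb (convex_Icc 0 t)
      (Set.left_mem_Icc.2 ht) (Set.right_mem_Icc.2 ht)
    have hw0 : w 0 = 2 * g x := by simp [hw_def, hu0, two_mul]
    have hwt : w t - w 0 = (g (γ t) - g x) + (g (γ (-t)) - g x) := by
      rw [hw0]; simp [hw_def, hu_def]; ring
    rw [← hwt]
    calc |w t - w 0| ≤ 2 * M₂ * t * ‖t - 0‖ := by
          simpa [Real.norm_eq_abs] using this
      _ = 2 * M₂ * t * t := by rw [sub_zero, Real.norm_eq_abs, abs_of_nonneg ht]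
  -- κ bounds
  have hκ₀inv : (0:ℝ) < κ₀⁻¹ := by positivity
  have hkb : ∀ y, |κ x y| ≤ κ₀ := by
    intro y
    rcases hκbdd x y with ⟨h1, h2⟩
    rw [abs_le]; constructor <;> nlinarith
  have hkd : ∀ t : ℝ, |t| ≤ 1 → |κ x (γ t) - κ x (γ (-t))| ≤ 2 * κ₁ * |t| ^ η := by
    intro t ht
    have h1 : |κ x (x + t • e) - κ x x| ≤ κ₁ * |t| ^ η := by
      have := hκreg x (t • e) (by rw [hγnorm]; exact ht)
      rwa [hγnorm] at this
    have h2 : |κ x (x + (-t) • e) - κ x x| ≤ κ₁ * |t| ^ η := by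
      have := hκreg x ((-t) • e) (by rw [hγnorm, abs_neg]; exact ht)
      rwa [hγnorm, abs_neg] at this
    calc |κ x (γ t) - κ x (γ (-t))|
        ≤ |κ x (γ t) - κ x x| + |κ x x - κ x (γ (-t))| := abs_sub_le _ _ _
      _ = |κ x (x + t • e) - κ x x| + |κ x (x + (-t) • e) - κ x x| := by
          rw [abs_sub_comm (κ x x)]
      _ ≤ κ₁ * |t| ^ η + κ₁ * |t| ^ η := add_le_add h1 h2
      _ = 2 * κ₁ * |t| ^ η := by ring
  -- the integrand and a measurable modification of φ
  set q : ℝ → ℝ := fun t => (g (γ t) - g x) * κ x (γ t) / (|t| * φ |t|) with hq_def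
  set Φ : ℝ → ℝ := fun s => if s ≤ 0 then 0 else φ s with hΦ_def
  have hΦmono : Monotone Φ := by
    intro a b hab
    simp only [hΦ_def]
    by_cases hb : b ≤ 0
    · rw [if_pos (hab.trans hb), if_pos hb]
    · rw [if_neg hb]
      by_cases ha : a ≤ 0
      · rw [if_pos ha]; exact (hφpos b (not_le.1 hb)).le
      · rw [if_neg ha]; exact hφmono a b (not_le.1 ha) hab
  have hΦeq : ∀ t : ℝ, t ≠ 0 → Φ |t| = φ |t| := by
    intro t ht; simp only [hΦ_def]; exact if_neg (not_le.2 (abs_pos.2 ht))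
  set qe : ℝ → ℝ := fun t => (g (γ t) - g x) * κ x (γ t) / (|t| * Φ |t|) with hqe_def
  have hkmeas' : Measurable fun t : ℝ => κ x (γ t) :=
    hκmeas.comp (measurable_const.prodMk hγcont.measurable)
  have hqe_meas : Measurable qe := by
    apply Measurable.div
    · exact (((hgcont.comp hγcont).sub continuous_const).measurable).mul hkmeas'
    · exact measurable_abs.mul (hΦmono.measurable.comp measurable_abs)
  have hqq : ∀ s : ℝ, s ≠ 0 → q s = qe s := by
    intro s hs; simp only [hq_def, hqe_def, hΦeq s hs]
  have haeq : ∀ f1 f2 : ℝ → ℝ, {t : ℝ | f1 t ≠ f2 t} ⊆ {0} → f1 =ᵐ[(volume : Measure ℝ)] f2 := by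
    intro f1 f2 hsub
    rw [Filter.EventuallyEq, ae_iff]
    exact measure_mono_null hsub (measure_singleton 0)
  have hq_ae : q =ᵐ[(volume : Measure ℝ)] qe := by
    apply haeq
    intro t ht
    simp only [Set.mem_singleton_iff]
    by_contra h0
    exact ht (hqq t h0)
  have hq_meas : AEStronglyMeasurable q (volume : Measure ℝ) :=
    hqe_meas.aestronglyMeasurable.congr hq_ae.symm
  set H : ℝ → ℝ := fun t => q t + q (-t) with hH_def
  have hHe_meas : Measurable fun t => qe t + qe (-t) :=
    hqe_meas.add (hqe_meas.comp measurable_neg)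
  have hH_ae : H =ᵐ[(volume : Measure ℝ)] fun t => qe t + qe (-t) := by
    apply haeq
    intro t ht
    simp only [Set.mem_singleton_iff]
    by_contra h0
    refine ht ?_
    simp only [hH_def]
    rw [hqq t h0, hqq (-t) (neg_ne_zero.2 h0)]
  have hH_meas : AEStronglyMeasurable H (volume : Measure ℝ) :=
    hHe_meas.aestronglyMeasurable.congr hH_ae.symm
  -- elementary bound on q
  have hq_abs : ∀ t : ℝ, t ≠ 0 → |q t| ≤ 2 * M₀ * κ₀ / (|t| * φ |t|) := by
    intro t ht
    have habs : 0 < |t| := abs_pos.2 ht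
    have hφt : 0 < φ |t| := hφpos _ habs
    have h1 : |g (γ t) - g x| ≤ 2 * M₀ := by
      calc |g (γ t) - g x| ≤ |g (γ t)| + |g x| := abs_sub _ _
        _ ≤ M₀ + M₀ := add_le_add (hM0 _) (hM0 _)
        _ = 2 * M₀ := by ring
    have hnum : |(g (γ t) - g x) * κ x (γ t)| ≤ 2 * M₀ * κ₀ := by
      rw [abs_mul]
      exact mul_le_mul h1 (hkb _) (abs_nonneg _) (by positivity)
    have hden : 0 < |t| * φ |t| := by positivity
    simp only [hq_def]
    rw [abs_div, abs_of_pos hden]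
    gcongr
  -- consequences of the weak scaling condition
  have hφ_upper : ∀ r t : ℝ, 0 < t → t ≤ r → 1 / φ t ≤ C * r ^ α₁ * t ^ (-α₁) / φ r := by
    intro r t ht htr
    have hr : 0 < r := lt_of_lt_of_le ht htr
    have hφt := hφpos t ht
    have hφr := hφpos r hr
    have h1 := (hWS t r ht htr).2
    have h2 : (r / t) ^ α₁ = r ^ α₁ * t ^ (-α₁) := by
      rw [Real.div_rpow hr.le ht.le, Real.rpow_neg ht.le, div_eq_mul_inv]
    rw [div_le_iff₀ hφt] at h1
    rw [div_le_div_iff₀ hφt hφr]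
    calc 1 * φ r = φ r := one_mul _
      _ ≤ C * (r / t) ^ α₁ * φ t := h1
      _ = C * r ^ α₁ * t ^ (-α₁) * φ t := by rw [h2]; ring
  have hφ_lower : ∀ r t : ℝ, 0 < r → r ≤ t → 1 / φ t ≤ r ^ α₀ * t ^ (-α₀) / (c * φ r) := by
    intro r t hr hrt
    have ht : 0 < t := lt_of_lt_of_le hr hrt
    have hφt := hφpos t ht
    have hφr := hφpos r hr
    have h1 := (hWS r t hr hrt).1
    rw [le_div_iff₀ hφr] at h1
    have h2 : (t / r) ^ α₀ = t ^ α₀ * r ^ (-α₀) := by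
      rw [Real.div_rpow ht.le hr.le, Real.rpow_neg hr.le, div_eq_mul_inv]
    have e1 : r ^ α₀ * r ^ (-α₀) = 1 := by
      rw [← Real.rpow_add hr]; simp
    have e2 : t ^ (-α₀) * t ^ α₀ = 1 := by
      rw [← Real.rpow_add ht]; simp
    have hpos : (0:ℝ) < r ^ α₀ * t ^ (-α₀) := by positivity
    rw [div_le_div_iff₀ hφt (by positivity)]
    calc 1 * (c * φ r) = (r ^ α₀ * r ^ (-α₀)) * (t ^ (-α₀) * t ^ α₀) * (c * φ r) := by
          rw [e1, e2]; ring
      _ = r ^ α₀ * t ^ (-α₀) * (c * (t / r) ^ α₀ * φ r) := by rw [h2]; ring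
      _ ≤ r ^ α₀ * t ^ (-α₀) * φ t := by
          apply mul_le_mul_of_nonneg_left h1 hpos.le
  -- main bound near the origin
  have main_bound : ∀ r : ℝ, 0 < r → r ≤ 1 →
      IntegrableOn H (Set.Ioc 0 r) ∧
      (∫ t in Set.Ioc (0:ℝ) r, |H t|) ≤
        2*C*κ₀/(2-α₁)/φ r * (r^2*M₂) + 2*C*κ₁/(η-α₁+1)/φ r * (r^(η+1)*M₁) := by
    intro r hr hr1
    have hφr := hφpos r hr
    set D : ℝ → ℝ :=
      fun t => C * r ^ α₁ / φ r * (2*M₂*κ₀ * t ^ (1-α₁) + 2*M₁*κ₁ * t ^ (η-α₁)) with hD_def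
    have hHb : ∀ t ∈ Set.Ioc (0:ℝ) r, |H t| ≤ D t := by
      intro t ht
      obtain ⟨ht0, htr⟩ := ht
      have ht1 : t ≤ 1 := htr.trans hr1
      have habs : |t| = t := abs_of_pos ht0
      have hφt := hφpos t ht0
      have hnegabs : |(-t)| = t := by rw [abs_neg, habs]
      have hqt : q t = (g (γ t) - g x) * κ x (γ t) / (t * φ t) := by
        simp only [hq_def, habs]
      have hqnt : q (-t) = (g (γ (-t)) - g x) * κ x (γ (-t)) / (t * φ t) := by
        simp only [hq_def, hnegabs]
      have hHt : H t =
          ((g (γ t) - g x) * κ x (γ t) + (g (γ (-t)) - g x) * κ x (γ (-t))) / (t * φ t) := by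
        simp only [hH_def]; rw [hqt, hqnt, ← add_div]
      have hnum : |(g (γ t) - g x) * κ x (γ t) + (g (γ (-t)) - g x) * κ x (γ (-t))|
          ≤ 2*M₂*κ₀*(t*t) + 2*M₁*κ₁*(t * t ^ η) := by
        set A := g (γ t) - g x with hA
        set B := g (γ (-t)) - g x with hB
        set K := κ x (γ t) with hK
        set K' := κ x (γ (-t)) with hK'
        have hsplit : A * K + B * K' = (A + B) * K + B * (K' - K) := by ring
        calc |A * K + B * K'| ≤ |(A + B) * K| + |B * (K' - K)| := by rw [hsplit]; exact abs_add_le _ _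
          _ = |A + B| * |K| + |B| * |K' - K| := by rw [abs_mul, abs_mul]
          _ ≤ (2*M₂*t*t)*κ₀ + (M₁*t)*(2*κ₁*t^η) := by
              apply add_le_add
              · exact mul_le_mul (hf2 t ht0.le) (hkb _) (abs_nonneg _) (by positivity)
              · apply mul_le_mul
                · simpa [hnegabs] using hf1 (-t)
                · have h' := hkd t (by rw [habs]; exact ht1)
                  rw [habs] at h'
                  calc |K' - K| = |K - K'| := abs_sub_comm _ _
                    _ ≤ 2*κ₁*t^η := h'
                · exact abs_nonneg _
                · positivity
          _ = 2*M₂*κ₀*(t*t) + 2*M₁*κ₁*(t*t^η) := by ring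
      have htφ : 0 < t * φ t := by positivity
      have step1 : |H t| ≤ (2*M₂*κ₀*t + 2*M₁*κ₁*t^η) * (1/φ t) := by
        rw [hHt, abs_div, abs_of_pos htφ]
        calc |(g (γ t) - g x) * κ x (γ t) + (g (γ (-t)) - g x) * κ x (γ (-t))| / (t*φ t)
            ≤ (2*M₂*κ₀*(t*t) + 2*M₁*κ₁*(t*t^η))/(t*φ t) := by gcongr
          _ = (2*M₂*κ₀*t + 2*M₁*κ₁*t^η) * (1/φ t) := by field_simp
      have step2 : (2*M₂*κ₀*t + 2*M₁*κ₁*t^η) * (1/φ t)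
          ≤ (2*M₂*κ₀*t + 2*M₁*κ₁*t^η) * (C * r^α₁ * t^(-α₁)/φ r) :=
        mul_le_mul_of_nonneg_left (hφ_upper r t ht0 htr) (by positivity)
      have step3 : (2*M₂*κ₀*t + 2*M₁*κ₁*t^η) * (C * r^α₁ * t^(-α₁)/φ r) = D t := by
        simp only [hD_def]
        have e1 : t * t ^ (-α₁) = t ^ (1-α₁) := by
          rw [show (1-α₁) = 1 + (-α₁) by ring, Real.rpow_add ht0, Real.rpow_one]
        have e2 : t ^ η * t ^ (-α₁) = t ^ (η-α₁) := by
          rw [← Real.rpow_add ht0, show η + -α₁ = η - α₁ by ring]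
        calc (2*M₂*κ₀*t + 2*M₁*κ₁*t^η) * (C * r^α₁ * t^(-α₁)/φ r)
            = C * r ^ α₁ / φ r * (2*M₂*κ₀ * (t * t^(-α₁)) + 2*M₁*κ₁ * (t^η * t^(-α₁))) := by
              ring
          _ = _ := by rw [e1, e2]
      exact step1.trans (step2.trans_eq step3)
    have hint1 : IntegrableOn (fun t : ℝ => t ^ (1-α₁)) (Set.Ioc 0 r) := by
      have h := intervalIntegral.intervalIntegrable_rpow' (a:=0) (b:=r) (show (-1:ℝ) < 1-α₁ by linarith)
      rwa [intervalIntegrable_iff_integrableOn_Ioc_of_le hr.le] at h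
    have hint2 : IntegrableOn (fun t : ℝ => t ^ (η-α₁)) (Set.Ioc 0 r) := by
      have h := intervalIntegral.intervalIntegrable_rpow' (a:=0) (b:=r) (show (-1:ℝ) < η-α₁ by linarith)
      rwa [intervalIntegrable_iff_integrableOn_Ioc_of_le hr.le] at h
    have hDint : IntegrableOn D (Set.Ioc 0 r) :=
      ((hint1.const_mul _).add (hint2.const_mul _)).const_mul _
    have hHIoc : IntegrableOn H (Set.Ioc 0 r) := by
      apply Integrable.mono' hDint hH_meas.restrict
      exact (ae_restrict_iff' measurableSet_Ioc).2 (Filter.Eventually.of_forall (fun t ht => by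
        rw [Real.norm_eq_abs]; exact hHb t ht))
    refine ⟨hHIoc, ?_⟩
    have h1 : (∫ t in Set.Ioc (0:ℝ) r, |H t|) ≤ ∫ t in Set.Ioc (0:ℝ) r, D t :=
      setIntegral_mono_on hHIoc.abs hDint measurableSet_Ioc (fun t ht => hHb t ht)
    have hIval1 : (∫ t in Set.Ioc (0:ℝ) r, t ^ (1-α₁)) = r ^ (2-α₁) / (2-α₁) := by
      open intervalIntegral in
      rw [← integral_of_le hr.le,
        integral_rpow (Or.inl (by linarith : (-1:ℝ) < 1-α₁))]
      rw [Real.zero_rpow (by linarith : (1-α₁+1) ≠ 0)]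
      rw [show (1-α₁+1) = 2-α₁ by ring]
      ring
    have hIval2 : (∫ t in Set.Ioc (0:ℝ) r, t ^ (η-α₁)) = r ^ (η-α₁+1) / (η-α₁+1) := by
      open intervalIntegral in
      rw [← integral_of_le hr.le,
        integral_rpow (Or.inl (by linarith : (-1:ℝ) < η-α₁))]
      rw [Real.zero_rpow (by linarith : (η-α₁+1) ≠ 0)]
      ring
    have hDval : (∫ t in Set.Ioc (0:ℝ) r, D t)
        = C * r ^ α₁ / φ r *
          (2*M₂*κ₀ * (r ^ (2-α₁)/(2-α₁)) + 2*M₁*κ₁ * (r ^ (η-α₁+1)/(η-α₁+1))) := by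
      simp only [hD_def]
      rw [integral_const_mul, integral_add (hint1.const_mul _) (hint2.const_mul _),
        integral_const_mul, integral_const_mul, hIval1, hIval2]
    have hr2 : r ^ α₁ * r ^ (2-α₁) = r ^ 2 := by
      rw [← Real.rpow_add hr, show α₁ + (2-α₁) = ((2:ℕ):ℝ) by norm_num, Real.rpow_natCast]
    have hr3 : r ^ α₁ * r ^ (η-α₁+1) = r ^ (η+1) := by
      rw [← Real.rpow_add hr, show α₁ + (η-α₁+1) = η+1 by ring]
    calc (∫ t in Set.Ioc (0:ℝ) r, |H t|)
        ≤ ∫ t in Set.Ioc (0:ℝ) r, D t := h1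
      _ = C * r ^ α₁ / φ r *
          (2*M₂*κ₀ * (r ^ (2-α₁)/(2-α₁)) + 2*M₁*κ₁ * (r ^ (η-α₁+1)/(η-α₁+1))) := hDval
      _ = 2*C*κ₀/(2-α₁)/φ r * (r^2*M₂) + 2*C*κ₁/(η-α₁+1)/φ r * (r^(η+1)*M₁) := by
          rw [← hr2, ← hr3]
          field_simp
  -- tail bound
  have tail_bound : ∀ r : ℝ, 0 < r → IntegrableOn H (Set.Ioi r) ∧
      (∫ t in Set.Ioi r, |H t|) ≤ 4*κ₀/(c*α₀)/φ r * M₀ := by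
    intro r hr
    have hφr := hφpos r hr
    set D : ℝ → ℝ := fun t => 4*M₀*κ₀*r^α₀/(c*φ r) * t ^ (-1-α₀) with hD_def
    have hHb : ∀ t ∈ Set.Ioi r, |H t| ≤ D t := by
      intro t ht
      have ht0 : 0 < t := hr.trans ht
      have habs : |t| = t := abs_of_pos ht0
      have hnegabs : |(-t)| = t := by rw [abs_neg, habs]
      have hφt := hφpos t ht0
      have h1 : |q t| ≤ 2*M₀*κ₀/(t * φ t) := by
        have h := hq_abs t ht0.ne'
        rwa [habs] at h
      have h2 : |q (-t)| ≤ 2*M₀*κ₀/(t * φ t) := by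
        have h := hq_abs (-t) (by simpa using ht0.ne')
        rwa [hnegabs] at h
      have h3 : |H t| ≤ 4*M₀*κ₀ * (t⁻¹ * (1/φ t)) := by
        calc |H t| ≤ |q t| + |q (-t)| := by simp only [hH_def]; exact abs_add_le _ _
          _ ≤ 2*M₀*κ₀/(t*φ t) + 2*M₀*κ₀/(t*φ t) := add_le_add h1 h2
          _ = 4*M₀*κ₀ * (t⁻¹ * (1/φ t)) := by field_simp; ring
      have h4 : (1:ℝ)/φ t ≤ r^α₀ * t^(-α₀)/(c * φ r) := hφ_lower r t hr (le_of_lt ht)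
      calc |H t| ≤ 4*M₀*κ₀ * (t⁻¹ * (1/φ t)) := h3
        _ ≤ 4*M₀*κ₀ * (t⁻¹ * (r^α₀ * t^(-α₀)/(c * φ r))) := by
            apply mul_le_mul_of_nonneg_left _ (by positivity)
            exact mul_le_mul_of_nonneg_left h4 (by positivity)
        _ = D t := by
            simp only [hD_def]
            have e1 : t⁻¹ * t ^ (-α₀) = t ^ (-1-α₀) := by
              rw [show (-1-α₀) = (-1) + (-α₀) by ring, Real.rpow_add ht0,
                Real.rpow_neg_one]
            calc 4*M₀*κ₀ * (t⁻¹ * (r^α₀ * t^(-α₀)/(c * φ r)))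
                = 4*M₀*κ₀*r^α₀/(c*φ r) * (t⁻¹ * t^(-α₀)) := by ring
              _ = _ := by rw [e1]
    have hint : IntegrableOn (fun t : ℝ => t ^ (-1-α₀)) (Set.Ioi r) :=
      integrableOn_Ioi_rpow_of_lt (by linarith) hr
    have hDint : IntegrableOn D (Set.Ioi r) := hint.const_mul _
    have hHIoi : IntegrableOn H (Set.Ioi r) := by
      apply Integrable.mono' hDint hH_meas.restrict
      exact (ae_restrict_iff' measurableSet_Ioi).2 (Filter.Eventually.of_forall (fun t ht => by
        rw [Real.norm_eq_abs]; exact hHb t ht))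
    refine ⟨hHIoi, ?_⟩
    have h1 : (∫ t in Set.Ioi r, |H t|) ≤ ∫ t in Set.Ioi r, D t :=
      setIntegral_mono_on hHIoi.abs hDint measurableSet_Ioi (fun t ht => hHb t ht)
    have hIval : (∫ t in Set.Ioi r, t ^ (-1-α₀)) = r ^ (-α₀) / α₀ := by
      rw [integral_Ioi_rpow_of_lt (by linarith) hr,
        show (-1-α₀+1) = -α₀ by ring]
      ring
    have hr4 : r ^ α₀ * r ^ (-α₀) = 1 := by rw [← Real.rpow_add hr]; simp
    calc (∫ t in Set.Ioi r, |H t|) ≤ ∫ t in Set.Ioi r, D t := h1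
      _ = 4*M₀*κ₀*r^α₀/(c*φ r) * (r ^ (-α₀)/α₀) := by
          simp only [hD_def]; rw [integral_const_mul, hIval]
      _ = 4*κ₀/(c*α₀)/φ r * M₀ := by
          have h5 : 4*M₀*κ₀*r^α₀/(c*φ r) * (r ^ (-α₀)/α₀)
              = 4*M₀*κ₀*(r^α₀*r^(-α₀))/(c*φ r*α₀) := by ring
          rw [h5, hr4]
          field_simp
  -- global integrability on (0,∞)
  have hHint0 : IntegrableOn H (Set.Ioi (0:ℝ)) := by
    rw [← Set.Ioc_union_Ioi_eq_Ioi (zero_le_one' ℝ)]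
    exact (main_bound 1 one_pos le_rfl).1.union (tail_bound 1 one_pos).1
  refine ⟨∫ t in Set.Ioi (0:ℝ), H t, ?_, ?_⟩
  · -- existence of the limit
    have hEq : ∀ ε : ℝ, 0 < ε →
        (∫ t in {t : ℝ | ε < |t|},
          (g (x + t • e) - g x) * κ x (x + t • e) / (|t| * φ |t|))
          = ∫ t in Set.Ioi ε, H t := by
      intro ε hε
      have hqγ : (fun t : ℝ => (g (x + t • e) - g x) * κ x (x + t • e) / (|t| * φ |t|))
          = q := by
        funext t; simp only [hq_def, hγ_def]
      have hsetq : {t : ℝ | ε < |t|} = Set.Iio (-ε) ∪ Set.Ioi ε := by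
        ext t
        simp only [Set.mem_setOf_eq, Set.mem_union, Set.mem_Iio, Set.mem_Ioi, lt_abs]
        constructor
        · rintro (h | h)
          · exact Or.inr h
          · exact Or.inl (by linarith)
        · rintro (h | h)
          · exact Or.inr (by linarith)
          · exact Or.inl h
      have hdom : ∀ f : ℝ → ℝ, AEStronglyMeasurable f (volume.restrict (Set.Ioi ε)) →
          (∀ t ∈ Set.Ioi ε, |f t| ≤ 2*M₀*κ₀/(t * φ t)) → IntegrableOn f (Set.Ioi ε) := by
        intro f hfm hfb
        have hφε := hφpos ε hε
        apply Integrable.mono' (g := fun t => 2*M₀*κ₀*ε^α₀/(c*φ ε) * t ^ (-1-α₀))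
          ((integrableOn_Ioi_rpow_of_lt (by linarith) hε).const_mul _) hfm
        apply (ae_restrict_iff' measurableSet_Ioi).2
        apply Filter.Eventually.of_forall
        intro t ht
        have ht0 : 0 < t := hε.trans ht
        have hφt := hφpos t ht0
        have e1 : t⁻¹ * t ^ (-α₀) = t ^ (-1-α₀) := by
          rw [show (-1-α₀) = (-1) + (-α₀) by ring, Real.rpow_add ht0, Real.rpow_neg_one]
        have h4 : (1:ℝ)/φ t ≤ ε^α₀ * t^(-α₀)/(c * φ ε) := hφ_lower ε t hε (le_of_lt ht)
        rw [Real.norm_eq_abs]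
        calc |f t| ≤ 2*M₀*κ₀/(t * φ t) := hfb t ht
          _ = 2*M₀*κ₀ * (t⁻¹ * (1/φ t)) := by field_simp <;> ring
          _ ≤ 2*M₀*κ₀ * (t⁻¹ * (ε^α₀ * t^(-α₀)/(c * φ ε))) := by
              apply mul_le_mul_of_nonneg_left _ (by positivity)
              exact mul_le_mul_of_nonneg_left h4 (by positivity)
          _ = 2*M₀*κ₀*ε^α₀/(c*φ ε) * (t⁻¹ * t ^ (-α₀)) := by ring
          _ = 2*M₀*κ₀*ε^α₀/(c*φ ε) * t ^ (-1-α₀) := by rw [e1]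
      have hqIoi : IntegrableOn q (Set.Ioi ε) := by
        apply hdom q hq_meas.restrict
        intro t ht
        have ht0 : 0 < t := hε.trans ht
        have h := hq_abs t ht0.ne'
        rwa [abs_of_pos ht0] at h
      have hJ_ae : (fun t : ℝ => q (-t)) =ᵐ[(volume : Measure ℝ)] fun t => qe (-t) := by
        apply haeq
        intro t ht
        simp only [Set.mem_singleton_iff]
        by_contra h0
        exact ht (hqq (-t) (neg_ne_zero.2 h0))
      have hJ_meas : AEStronglyMeasurable (fun t : ℝ => q (-t)) (volume : Measure ℝ) :=
        ((hqe_meas.comp measurable_neg).aestronglyMeasurable).congr hJ_ae.symm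
      have hJIoi : IntegrableOn (fun t : ℝ => q (-t)) (Set.Ioi ε) := by
        apply hdom _ hJ_meas.restrict
        intro t ht
        have ht0 : 0 < t := hε.trans ht
        have h := hq_abs (-t) (by simpa using ht0.ne')
        rwa [abs_neg, abs_of_pos ht0] at h
      have hmapneg : volume.restrict (Set.Iio (-ε)) =
          Measure.map Neg.neg (volume.restrict (Set.Ioi ε)) := by
        have hpre : (Neg.neg : ℝ → ℝ) ⁻¹' (Set.Iio (-ε)) = Set.Ioi ε := by
          ext s
          simp only [Set.mem_preimage, Set.mem_Iio, Set.mem_Ioi]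
          constructor
          · intro h; linarith
          · intro h; linarith
        rw [← hpre, ← Measure.restrict_map measurable_neg measurableSet_Iio,
          Measure.map_neg_eq_self]
      have hqIio : IntegrableOn q (Set.Iio (-ε)) := by
        have h' : Integrable (q ∘ Neg.neg) (volume.restrict (Set.Ioi ε)) := hJIoi
        unfold IntegrableOn
        rw [hmapneg]
        exact ((Homeomorph.neg ℝ).measurableEmbedding.integrable_map_iff).2 h'
      have hIio_int : (∫ t in Set.Iio (-ε), q t) = ∫ t in Set.Ioi ε, q (-t) := by
        rw [hmapneg, integral_map measurable_neg.aemeasurable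
          (by rw [← hmapneg]; exact hq_meas.restrict)]
      rw [hqγ, hsetq,
        setIntegral_union (((Set.Iic_disjoint_Ioi (by linarith : -ε ≤ ε)).mono_left Set.Iio_subset_Iic_self)) measurableSet_Ioi hqIio hqIoi,
        hIio_int, ← integral_add hJIoi hqIoi]
      refine setIntegral_congr_fun measurableSet_Ioi fun t _ => ?_
      simp only [hH_def]
      ring
    have htendsto : Tendsto (fun ε : ℝ => ∫ t in Set.Ioi ε, H t) (𝓝[>] (0:ℝ))
        (𝓝 (∫ t in Set.Ioi (0:ℝ), H t)) := by
      have heq2 : ∀ ε : ℝ, 0 < ε → (∫ t in Set.Ioi ε, H t)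
          = ∫ t in Set.Ioi (0:ℝ), (Set.Ioi ε).indicator H t := by
        intro ε hε
        rw [setIntegral_indicator measurableSet_Ioi]
        congr 1
        rw [Set.Ioi_inter_Ioi, max_eq_right hε.le]
      have hmeas : ∀ᶠ ε in 𝓝[>] (0:ℝ),
          AEStronglyMeasurable ((Set.Ioi ε).indicator H) (volume.restrict (Set.Ioi (0:ℝ))) :=
        Filter.Eventually.of_forall fun ε => (hH_meas.restrict).indicator measurableSet_Ioi
      have hbound : ∀ᶠ ε in 𝓝[>] (0:ℝ), ∀ᵐ t ∂(volume.restrict (Set.Ioi (0:ℝ))),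
          ‖(Set.Ioi ε).indicator H t‖ ≤ |H t| := by
        refine Filter.Eventually.of_forall fun ε => Filter.Eventually.of_forall fun t => ?_
        simpa [Real.norm_eq_abs] using norm_indicator_le_norm_self H t (s := Set.Ioi ε)
      have hint : Integrable (fun t => |H t|) (volume.restrict (Set.Ioi (0:ℝ))) := hHint0.abs
      have hlim : ∀ᵐ t ∂(volume.restrict (Set.Ioi (0:ℝ))),
          Tendsto (fun ε => (Set.Ioi ε).indicator H t) (𝓝[>] (0:ℝ)) (𝓝 (H t)) := by
        filter_upwards [ae_restrict_mem measurableSet_Ioi] with t ht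
        apply Filter.Tendsto.congr' _ tendsto_const_nhds
        filter_upwards [Ioo_mem_nhdsGT ht] with ε hε
        exact (Set.indicator_of_mem hε.2 H).symm
      have hDCT := tendsto_integral_filter_of_dominated_convergence
        (μ := volume.restrict (Set.Ioi (0:ℝ))) (l := 𝓝[>] (0:ℝ))
        (F := fun ε => (Set.Ioi ε).indicator H) (f := H) (fun t => |H t|)
        hmeas hbound hint hlim
      apply hDCT.congr'
      filter_upwards [self_mem_nhdsWithin] with ε hε
      exact (heq2 ε hε).symm
    apply htendsto.congr'
    filter_upwards [self_mem_nhdsWithin] with ε hε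
    exact (hEq ε hε).symm
  · -- the quantitative bound
    intro r hr hr1
    have hφr := hφpos r hr
    have hsplit : (∫ t in Set.Ioi (0:ℝ), |H t|)
        = (∫ t in Set.Ioc (0:ℝ) r, |H t|) + ∫ t in Set.Ioi r, |H t| := by
      rw [← setIntegral_union (Set.Ioc_disjoint_Ioi le_rfl) measurableSet_Ioi
        (main_bound r hr hr1.le).1.abs (tail_bound r hr).1.abs,
        Set.Ioc_union_Ioi_eq_Ioi hr.le]
    have habs : |∫ t in Set.Ioi (0:ℝ), H t| ≤ ∫ t in Set.Ioi (0:ℝ), |H t| := by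
      simpa [Real.norm_eq_abs] using
        norm_integral_le_integral_norm (μ := volume.restrict (Set.Ioi (0:ℝ))) H
    have h1 := (main_bound r hr hr1.le).2
    have h2 := (tail_bound r hr).2
    have hx2 : (0:ℝ) ≤ r^2*M₂ := by positivity
    have hx1 : (0:ℝ) ≤ r^(η+1)*M₁ := by positivity
    calc |∫ t in Set.Ioi (0:ℝ), H t| ≤ ∫ t in Set.Ioi (0:ℝ), |H t| := habs
      _ = (∫ t in Set.Ioc (0:ℝ) r, |H t|) + ∫ t in Set.Ioi r, |H t| := hsplit
      _ ≤ (2*C*κ₀/(2-α₁)/φ r * (r^2*M₂) + 2*C*κ₁/(η-α₁+1)/φ r * (r^(η+1)*M₁))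
            + 4*κ₀/(c*α₀)/φ r * M₀ := add_le_add h1 h2
      _ ≤ (2*C*κ₀/(2-α₁) + 2*C*κ₁/(η-α₁+1) + 4*κ₀/(c*α₀)) / φ r
            * (r^2*M₂ + r^(η+1)*M₁ + M₀) := by
          have expand : (2*C*κ₀/(2-α₁) + 2*C*κ₁/(η-α₁+1) + 4*κ₀/(c*α₀)) / φ r
                * (r^2*M₂ + r^(η+1)*M₁ + M₀)
              = (2*C*κ₀/(2-α₁)/φ r * (r^2*M₂) + 2*C*κ₁/(η-α₁+1)/φ r * (r^(η+1)*M₁)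
                  + 4*κ₀/(c*α₀)/φ r * M₀)
                + (2*C*κ₀/(2-α₁)/φ r * (r^(η+1)*M₁) + 2*C*κ₀/(2-α₁)/φ r * M₀
                  + 2*C*κ₁/(η-α₁+1)/φ r * (r^2*M₂) + 2*C*κ₁/(η-α₁+1)/φ r * M₀
                  + 4*κ₀/(c*α₀)/φ r * (r^2*M₂) + 4*κ₀/(c*α₀)/φ r * (r^(η+1)*M₁)) := by
            ring
          rw [expand]
          have k1 : (0:ℝ) ≤ 2*C*κ₀/(2-α₁)/φ r := by positivity
          have k2 : (0:ℝ) ≤ 2*C*κ₁/(η-α₁+1)/φ r := by positivity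
          have k3 : (0:ℝ) ≤ 4*κ₀/(c*α₀)/φ r := by positivity
          nlinarith [mul_nonneg k1 hx1, mul_nonneg k1 hM0nn, mul_nonneg k2 hx2,
            mul_nonneg k2 hM0nn, mul_nonneg k3 hx2, mul_nonneg k3 hx1]
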